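/- Let F be a finite field with q elements, ψ : F → ℂ a nontrivial additive character, G = GL(n,F), B ⊂ G the subgroup of invertible upper triangular matrices, T ⊂ B the diagonal torus, and for b ∈ B let d(b) ∈ T denote its diagonal part. For f : T → ℂ define the induced class function J(f) : G → ℂ by J(f)(g) = Σ_{x ∈ G, x⁻¹gx ∈ B} f(d(x⁻¹gx)). Then for every f : T → ℂ and every g ∈ G: Σ_{h ∈ G} ψ(tr h)·J(f)(h⁻¹g) = q^{n(n−1)/2} · J(f')(g), where f'(t) = Σ_{s ∈ T} ψ(tr s)·f(s⁻¹t). (This is the function-theoretic content of Theorem 'convolution'(1): convolution with the γ-sheaf Φ_{G,ρ,ψ} = tr*L_ψ[n²](n²/2) commutes with the induction functor Ind_T^G, i.e. Φ_{G,ρ,ψ} ⋆ Ind_T^G(F) ≅ Ind_T^G(Φ_{T,ρ,ψ} ⋆ F) for GL(n).) -/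

import Mathlib

open scoped Classical
set_option linter.unusedSectionVars false
set_option linter.unusedVariables false
set_option maxHeartbeats 1000000

namespace ConvAux

variable {F : Type} [Field F] [Fintype F] [DecidableEq F] {n : ℕ}

abbrev P (n : ℕ) := {p : Fin n × Fin n // p.1 < p.2}

def Upp (M : Matrix (Fin n) (Fin n) F) : Prop := ∀ i j : Fin n, j < i → M i j = 0

lemma upp_iff_BT (M : Matrix (Fin n) (Fin n) F) : Upp M ↔ M.BlockTriangular id :=
  ⟨fun h i j hij => h i j hij, fun h i j hij => h hij⟩

lemma card_P : Fintype.card (P n) = n * (n - 1) / 2 := by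
  have e : P n ≃ Σ j : Fin n, Fin j.val :=
    { toFun := fun p => ⟨p.1.2, ⟨p.1.1.val, p.2⟩⟩
      invFun := fun q => ⟨(⟨q.2.val, lt_trans q.2.isLt q.1.isLt⟩, q.1), q.2.isLt⟩
      left_inv := fun p => by ext <;> rfl
      right_inv := fun q => by rfl }
  rw [Fintype.card_congr e]
  simp only [Fintype.card_sigma, Fintype.card_fin]
  rw [Fin.sum_univ_eq_sum_range (fun i => i), Finset.sum_range_id]

lemma charsum (ψ : AddChar F ℂ) (hψ : ψ ≠ 1) (a : F) :
    ∑ c : F, ψ (a * c) = if a = 0 then (Fintype.card F : ℂ) else 0 := by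
  have h1 : ∀ c : F, ψ (a * c) = ψ.mulShift a c := fun c => rfl
  simp_rw [h1]
  rw [AddChar.sum_eq_ite]
  by_cases h : a = 0
  · rw [if_pos h, if_pos]
    rw [h, AddChar.mulShift_zero]; rfl
  · rw [if_neg h, if_neg]
    rw [show (0 : AddChar F ℂ) = 1 from rfl,
      AddChar.mulShift_unit_eq_one_iff ψ (isUnit_iff_ne_zero.2 h)]
    exact hψ

lemma psi_sum (ψ : AddChar F ℂ) {ι : Type*} (s : Finset ι) (g : ι → F) :
    ψ (∑ i ∈ s, g i) = ∏ i ∈ s, ψ (g i) := by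
  classical
  induction s using Finset.cons_induction with
  | empty => simp
  | cons a s ha ih => rw [Finset.sum_cons, Finset.prod_cons, AddChar.map_add_eq_mul, ih]

/-- upper triangular matrix with diagonal `t` and strictly upper entries `v` -/
def upM (t : Fin n → Fˣ) (v : P n → F) : Matrix (Fin n) (Fin n) F :=
  Matrix.diagonal (fun i => (t i : F)) +
    Matrix.of (fun i j => if h : i < j then v ⟨(i, j), h⟩ else 0)

lemma upM_diag (t : Fin n → Fˣ) (v : P n → F) (i : Fin n) : upM t v i i = t i := by
  simp [upM, Matrix.diagonal_apply_eq]

lemma upM_lt (t : Fin n → Fˣ) (v : P n → F) {i j : Fin n} (h : i < j) :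
    upM t v i j = v ⟨(i, j), h⟩ := by
  simp [upM, Matrix.diagonal_apply_ne _ (ne_of_lt h), dif_pos h]

lemma upM_upp (t : Fin n → Fˣ) (v : P n → F) : Upp (upM t v) := by
  intro i j hij
  simp [upM, Matrix.diagonal_apply_ne _ (ne_of_gt hij), dif_neg (asymm hij)]

lemma diag_ne_zero {c : GL (Fin n) F} (h : Upp (c : Matrix (Fin n) (Fin n) F)) (i : Fin n) :
    (c : Matrix (Fin n) (Fin n) F) i i ≠ 0 := by
  have hdet : IsUnit (c : Matrix (Fin n) (Fin n) F).det :=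
    (Matrix.isUnit_iff_isUnit_det _).1 c.isUnit
  rw [Matrix.det_of_upperTriangular ((upp_iff_BT _).1 h)] at hdet
  have := hdet.ne_zero
  rw [Finset.prod_ne_zero_iff] at this
  exact this i (Finset.mem_univ i)

lemma upp_inv {c : GL (Fin n) F} (h : Upp (c : Matrix (Fin n) (Fin n) F)) :
    Upp ((c⁻¹ : GL (Fin n) F) : Matrix (Fin n) (Fin n) F) := by
  haveI : Invertible (c : Matrix (Fin n) (Fin n) F) := c.invertible
  rw [upp_iff_BT]
  rw [Matrix.coe_units_inv]
  exact Matrix.blockTriangular_inv_of_blockTriangular ((upp_iff_BT _).1 h)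

lemma diag_inv {c : GL (Fin n) F} (h : Upp (c : Matrix (Fin n) (Fin n) F)) (i : Fin n) :
    ((c⁻¹ : GL (Fin n) F) : Matrix (Fin n) (Fin n) F) i i
      = ((c : Matrix (Fin n) (Fin n) F) i i)⁻¹ := by
  have h1 : ((c : Matrix (Fin n) (Fin n) F) * ((c⁻¹ : GL (Fin n) F) : Matrix (Fin n) (Fin n) F))
      = 1 := by
    rw [← Units.val_mul, mul_inv_cancel, Units.val_one]
  have h2 := congrArg (fun M => M i i) h1
  simp only [Matrix.mul_apply, Matrix.one_apply_eq] at h2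
  rw [Finset.sum_eq_single i] at h2
  · exact eq_inv_of_mul_eq_one_right h2
  · intro j _ hj
    rcases lt_or_gt_of_ne hj with hlt | hgt
    · rw [h i j hlt, zero_mul]
    · rw [upp_inv h j i hgt, mul_zero]
  · intro hi; exact absurd (Finset.mem_univ i) hi

lemma upM_isUnit (t : Fin n → Fˣ) (v : P n → F) : IsUnit (upM t v) := by
  rw [Matrix.isUnit_iff_isUnit_det,
    Matrix.det_of_upperTriangular ((upp_iff_BT _).1 (upM_upp t v))]
  rw [isUnit_iff_ne_zero, Finset.prod_ne_zero_iff]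
  intro i _
  rw [upM_diag]
  exact (t i).ne_zero

lemma upM_eq_of_upp {c : GL (Fin n) F} (h : Upp (c : Matrix (Fin n) (Fin n) F)) :
    upM (fun k => if hk : (c : Matrix (Fin n) (Fin n) F) k k = 0 then 1
          else Units.mk0 _ hk)
        (fun p => (c : Matrix (Fin n) (Fin n) F) p.1.1 p.1.2)
      = (c : Matrix (Fin n) (Fin n) F) := by
  have hd : ∀ i, (c : Matrix (Fin n) (Fin n) F) i i ≠ 0 := diag_ne_zero h
  ext i j
  rcases lt_trichotomy i j with hij | rfl | hij
  · rw [upM_lt _ _ hij]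
  · rw [upM_diag, dif_neg (hd i)]; rfl
  · rw [upM_upp _ _ i j hij, h i j hij]

/-- Sum over upper-triangular elements of `GL` as a sum over the parametrization. -/
lemma sum_gl_upper (φ : Matrix (Fin n) (Fin n) F → ℂ) :
    (∑ c : GL (Fin n) F, if Upp (c : Matrix (Fin n) (Fin n) F)
        then φ (c : Matrix (Fin n) (Fin n) F) else 0)
      = ∑ t : Fin n → Fˣ, ∑ v : P n → F, φ (upM t v) := by
  have hsplit : ∑ q : (Fin n → Fˣ) × (P n → F), φ (upM q.1 q.2)
      = ∑ t : Fin n → Fˣ, ∑ v : P n → F, φ (upM t v) := Fintype.sum_prod_type _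
  rw [← Finset.sum_filter, ← hsplit]
  refine Finset.sum_nbij'
    (i := fun c => ((fun k => if hk : (c : Matrix (Fin n) (Fin n) F) k k = 0 then 1
        else Units.mk0 _ hk),
      (fun p => (c : Matrix (Fin n) (Fin n) F) p.1.1 p.1.2)))
    (j := fun q => (upM_isUnit q.1 q.2).unit) ?_ ?_ ?_ ?_ ?_
  · intro c hc; exact Finset.mem_univ _
  · intro q hq
    rw [Finset.mem_filter]
    refine ⟨Finset.mem_univ _, ?_⟩
    rw [IsUnit.unit_spec]
    exact upM_upp q.1 q.2
  · intro c hc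
    rw [Finset.mem_filter] at hc
    exact Units.ext (by rw [IsUnit.unit_spec]; exact upM_eq_of_upp hc.2)
  · intro q hq
    have hu : ((upM_isUnit q.1 q.2).unit : Matrix (Fin n) (Fin n) F) = upM q.1 q.2 :=
      IsUnit.unit_spec _
    refine Prod.ext ?_ ?_
    · funext k
      have h1 : (upM q.1 q.2) k k ≠ 0 := by rw [upM_diag]; exact (q.1 k).ne_zero
      simp only [hu]
      rw [dif_neg h1]
      refine Units.ext ?_
      rw [Units.val_mk0, upM_diag]
    · funext p
      simp only [hu]
      exact upM_lt q.1 q.2 p.2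
  · intro c hc
    rw [Finset.mem_filter] at hc
    rw [upM_eq_of_upp hc.2]

lemma trace_upM (y : Matrix (Fin n) (Fin n) F) (t : Fin n → Fˣ) (v : P n → F) :
    (y * upM t v).trace = (∑ i, y i i * t i) + ∑ p : P n, y p.1.2 p.1.1 * v p := by
  rw [upM, mul_add, Matrix.trace_add]
  congr 1
  · simp [Matrix.trace, Matrix.diag, Matrix.mul_diagonal]
  · -- strictly upper part
    set g' : Fin n × Fin n → F :=
      fun q => if h : q.1 < q.2 then y q.2 q.1 * v ⟨q, h⟩ else 0 with hg'
    have step1 : (y * Matrix.of fun i j => if h : i < j then v ⟨(i, j), h⟩ else 0).trace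
        = ∑ q : Fin n × Fin n, g' (q.2, q.1) := by
      rw [Fintype.sum_prod_type]
      simp only [Matrix.trace, Matrix.diag, Matrix.mul_apply, Matrix.of_apply, hg']
      refine Finset.sum_congr rfl fun i _ => Finset.sum_congr rfl fun j _ => ?_
      by_cases h : j < i
      · rw [dif_pos h, dif_pos h]
      · rw [dif_neg h, dif_neg h, mul_zero]
    have step2 : ∑ q : Fin n × Fin n, g' (q.2, q.1) = ∑ q : Fin n × Fin n, g' q :=
      Fintype.sum_equiv (Equiv.prodComm _ _) _ _ (fun q => rfl)
    have step3 : ∑ q : Fin n × Fin n, g' q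
        = ∑ q ∈ Finset.univ.filter (fun q : Fin n × Fin n => q.1 < q.2), g' q := by
      refine (Finset.sum_subset (Finset.filter_subset _ _) ?_).symm
      intro x _ hx
      rw [Finset.mem_filter] at hx
      push_neg at hx
      exact dif_neg (not_lt.2 (hx (Finset.mem_univ x)))
    have step4 : ∑ q ∈ Finset.univ.filter (fun q : Fin n × Fin n => q.1 < q.2), g' q
        = ∑ p : P n, g' ↑p :=
      Finset.sum_subtype _ (by simp) _
    rw [step1, step2, step3, step4]
    refine Finset.sum_congr rfl fun p _ => ?_
    rw [hg']
    simp only [dif_pos p.2]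

lemma vsum (ψ : AddChar F ℂ) (hψ : ψ ≠ 1) (y : Matrix (Fin n) (Fin n) F) (t : Fin n → Fˣ) :
    ∑ v : P n → F, ψ ((y * upM t v).trace)
      = (if Upp y then ((Fintype.card F : ℂ)) ^ (n * (n - 1) / 2) else 0)
        * ψ (∑ i, y i i * t i) := by
  have h1 : ∀ v : P n → F, ψ ((y * upM t v).trace)
      = ψ (∑ i, y i i * t i) * ∏ p : P n, ψ (y p.1.2 p.1.1 * v p) := by
    intro v
    rw [trace_upM, AddChar.map_add_eq_mul,
      psi_sum ψ Finset.univ (fun p : P n => y p.1.2 p.1.1 * v p)]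
  simp_rw [h1]
  rw [← Finset.mul_sum]
  have h3 : ∑ v : P n → F, ∏ p : P n, ψ (y p.1.2 p.1.1 * v p)
      = ∏ p : P n, ∑ c : F, ψ (y p.1.2 p.1.1 * c) := by
    have h4 : (Finset.univ : Finset (P n → F))
        = Fintype.piFinset (fun _ => (Finset.univ : Finset F)) := (Fintype.piFinset_univ).symm
    rw [h4]
    exact Eq.symm (Finset.prod_univ_sum (fun _ : P n => (Finset.univ : Finset F))
      (fun p c => ψ (y p.1.2 p.1.1 * c)))
  rw [h3]
  have h2 : ∀ p : P n, ∑ c : F, ψ (y p.1.2 p.1.1 * c)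
      = if y p.1.2 p.1.1 = 0 then (Fintype.card F : ℂ) else 0 := fun p => charsum ψ hψ _
  rw [Finset.prod_congr rfl fun p _ => h2 p]
  rw [mul_comm]
  congr 1
  by_cases hy : Upp y
  · rw [if_pos hy, Finset.prod_congr rfl fun (p : P n) _ => if_pos (hy p.1.2 p.1.1 p.2),
      Finset.prod_const, Finset.card_univ, card_P]
  · rw [if_neg hy]
    have : ∃ i j : Fin n, j < i ∧ y i j ≠ 0 := by
      by_contra hc
      push_neg at hc
      exact hy fun i j hij => hc i j hij
    obtain ⟨i, j, hij, hne⟩ := this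
    exact Finset.prod_eq_zero (Finset.mem_univ (⟨(j, i), hij⟩ : P n)) (if_neg hne)

lemma key (ψ : AddChar F ℂ) (hψ : ψ ≠ 1) (f : (Fin n → F) → ℂ) (y : GL (Fin n) F) :
    (∑ h : GL (Fin n) F, ψ ((h : Matrix (Fin n) (Fin n) F).trace) *
        (if Upp ((h⁻¹ * y : GL (Fin n) F) : Matrix (Fin n) (Fin n) F)
          then f (fun i => ((h⁻¹ * y : GL (Fin n) F) : Matrix (Fin n) (Fin n) F) i i) else 0))
      = (Fintype.card F : ℂ) ^ (n * (n - 1) / 2) *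
        (if Upp ((y : GL (Fin n) F) : Matrix (Fin n) (Fin n) F)
          then ∑ s : Fin n → Fˣ, ψ (∑ i, (s i : F)) *
            f (fun i => ((s i)⁻¹ : F) * ((y : GL (Fin n) F) : Matrix (Fin n) (Fin n) F) i i)
          else 0) := by
  -- reindex h = y * c
  have step1 : (∑ h : GL (Fin n) F, ψ ((h : Matrix (Fin n) (Fin n) F).trace) *
        (if Upp ((h⁻¹ * y : GL (Fin n) F) : Matrix (Fin n) (Fin n) F)
          then f (fun i => ((h⁻¹ * y : GL (Fin n) F) : Matrix (Fin n) (Fin n) F) i i) else 0))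
      = ∑ c : GL (Fin n) F, ψ (((y : Matrix (Fin n) (Fin n) F) * (c : Matrix (Fin n) (Fin n) F)).trace) *
        (if Upp ((c⁻¹ : GL (Fin n) F) : Matrix (Fin n) (Fin n) F)
          then f (fun i => ((c⁻¹ : GL (Fin n) F) : Matrix (Fin n) (Fin n) F) i i) else 0) := by
    refine Eq.symm (Fintype.sum_equiv (Equiv.mulLeft y) _ _ fun c => ?_)
    simp only [Equiv.coe_mulLeft]
    simp only [show (y * c)⁻¹ * y = c⁻¹ by group, Units.val_mul]
  rw [step1]
  -- rewrite the inverse conditions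
  have step2 : ∀ c : GL (Fin n) F,
      (if Upp ((c⁻¹ : GL (Fin n) F) : Matrix (Fin n) (Fin n) F)
        then f (fun i => ((c⁻¹ : GL (Fin n) F) : Matrix (Fin n) (Fin n) F) i i) else 0)
      = (if Upp ((c : Matrix (Fin n) (Fin n) F))
        then f (fun i => (((c : Matrix (Fin n) (Fin n) F)) i i)⁻¹) else 0) := by
    intro c
    by_cases hc : Upp ((c : Matrix (Fin n) (Fin n) F))
    · rw [if_pos (upp_inv hc), if_pos hc]
      congr 1
      funext i
      exact diag_inv hc i
    · rw [if_neg hc, if_neg]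
      intro hinv
      exact hc (by simpa using upp_inv hinv)
  simp_rw [step2, mul_ite, mul_zero]
  rw [sum_gl_upper (fun M => ψ (((y : Matrix (Fin n) (Fin n) F) * M).trace)
    * f (fun i => (M i i)⁻¹))]
  have step3 : ∀ t : Fin n → Fˣ, ∀ v : P n → F,
      ψ (((y : Matrix (Fin n) (Fin n) F) * upM t v).trace) * f (fun i => ((upM t v) i i)⁻¹)
      = ψ (((y : Matrix (Fin n) (Fin n) F) * upM t v).trace) * f (fun i => ((t i : F))⁻¹) := by
    intro t v
    congr 2
    funext i
    rw [upM_diag]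
  simp_rw [step3]
  have step4 : ∀ t : Fin n → Fˣ,
      ∑ v : P n → F, ψ (((y : Matrix (Fin n) (Fin n) F) * upM t v).trace)
        * f (fun i => ((t i : F))⁻¹)
      = ((if Upp ((y : Matrix (Fin n) (Fin n) F)) then (Fintype.card F : ℂ) ^ (n * (n - 1) / 2) else 0)
          * ψ (∑ i, (y : Matrix (Fin n) (Fin n) F) i i * t i)) * f (fun i => ((t i : F))⁻¹) := by
    intro t
    rw [← Finset.sum_mul, vsum ψ hψ]
  simp_rw [step4]
  by_cases hy : Upp ((y : Matrix (Fin n) (Fin n) F))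
  · simp only [if_pos hy]
    simp_rw [mul_assoc]
    rw [← Finset.mul_sum]
    congr 1
    have hne : ∀ i, ((y : GL (Fin n) F) : Matrix (Fin n) (Fin n) F) i i ≠ 0 :=
      fun i => diag_ne_zero hy i
    refine Eq.symm (Fintype.sum_equiv
      (Equiv.piCongrRight fun i => Equiv.mulLeft ((Units.mk0 _ (hne i))⁻¹)) _ _ fun s => ?_)
    have hv : ∀ i : Fin n, ((((Units.mk0 _ (hne i))⁻¹ * s i) : Fˣ) : F)
        = (((y : GL (Fin n) F) : Matrix (Fin n) (Fin n) F) i i)⁻¹ * (s i : F) := by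
      intro i
      rw [Units.val_mul, Units.val_inv_eq_inv_val, Units.val_mk0]
    have happ : ∀ i : Fin n,
        ((Equiv.piCongrRight fun i => Equiv.mulLeft ((Units.mk0 _ (hne i))⁻¹)) s) i
          = (Units.mk0 _ (hne i))⁻¹ * s i := fun i => rfl
    congr 1
    · congr 1
      refine Finset.sum_congr rfl fun i _ => ?_
      rw [happ i, hv i, mul_inv_cancel_left₀ (hne i)]
    · congr 1
      funext i
      rw [happ i, hv i, mul_inv_rev, inv_inv]
  · simp only [if_neg hy, zero_mul, mul_zero, Finset.sum_const_zero]

end ConvAux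



open scoped Classical in
/-- The induction of a function `f` on the diagonal torus `T` to a class function on
`G = GL(n,F)`: `J(f)(g) = Σ_{x ∈ G, x⁻¹gx ∈ B} f(d(x⁻¹gx))`, where `B` is the upper
triangular Borel and `d` extracts the diagonal part. -/
noncomputable def indT {F : Type} [Field F] [Fintype F] [DecidableEq F] {n : ℕ}
    (f : (Fin n → F) → ℂ) (g : GL (Fin n) F) : ℂ :=
  ∑ x : GL (Fin n) F,
    if ∀ i j : Fin n, j < i → ((x⁻¹ * g * x : GL (Fin n) F) : Matrix (Fin n) (Fin n) F) i j = 0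
    then f (fun i => ((x⁻¹ * g * x : GL (Fin n) F) : Matrix (Fin n) (Fin n) F) i i)
    else 0

/-- convolution with `h ↦ ψ(tr h)` commutes with induction from the
diagonal torus: `Σ_{h ∈ G} ψ(tr h)·J(f)(h⁻¹g) = q^{n(n-1)/2} · J(f')(g)` where
`f'(t) = Σ_{s ∈ T} ψ(tr s)·f(s⁻¹t)`. -/
theorem conv_psi_trace_comm_ind {F : Type} [Field F] [Fintype F] [DecidableEq F]
    (ψ : AddChar F ℂ) (hψ : ψ ≠ 1) {n : ℕ} (f : (Fin n → F) → ℂ) (g : GL (Fin n) F) :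
    ∑ h : GL (Fin n) F, ψ ((h : Matrix (Fin n) (Fin n) F).trace) * indT f (h⁻¹ * g)
      = (Fintype.card F : ℂ) ^ (n * (n - 1) / 2) *
        indT (fun t => ∑ s : Fin n → Fˣ, ψ (∑ i, (s i : F)) * f (fun i => ((s i)⁻¹ : F) * t i)) g := by
  unfold indT
  have hupp : ∀ M : Matrix (Fin n) (Fin n) F,
      (∀ i j : Fin n, j < i → M i j = 0) = ConvAux.Upp M := fun M => rfl
  simp only [hupp]
  simp_rw [Finset.mul_sum]
  rw [Finset.sum_comm]
  refine Finset.sum_congr rfl fun x _ => ?_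
  have hx : ∀ h : GL (Fin n) F,
      x⁻¹ * ((x * h * x⁻¹)⁻¹ * g) * x = h⁻¹ * (x⁻¹ * g * x) := by
    intro h; group
  have htr : ∀ h : GL (Fin n) F,
      ((x * h * x⁻¹ : GL (Fin n) F) : Matrix (Fin n) (Fin n) F).trace
        = ((h : GL (Fin n) F) : Matrix (Fin n) (Fin n) F).trace := by
    intro h
    rw [Units.val_mul, Units.val_mul]
    exact Matrix.trace_units_conj x _
  have step : (∑ h : GL (Fin n) F,
        ψ ((h : Matrix (Fin n) (Fin n) F).trace) *
        (if ConvAux.Upp ((x⁻¹ * (h⁻¹ * g) * x : GL (Fin n) F) : Matrix (Fin n) (Fin n) F)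
          then f (fun i => ((x⁻¹ * (h⁻¹ * g) * x : GL (Fin n) F) : Matrix (Fin n) (Fin n) F) i i)
          else 0))
      = ∑ h : GL (Fin n) F,
        ψ ((h : Matrix (Fin n) (Fin n) F).trace) *
        (if ConvAux.Upp ((h⁻¹ * (x⁻¹ * g * x) : GL (Fin n) F) : Matrix (Fin n) (Fin n) F)
          then f (fun i => ((h⁻¹ * (x⁻¹ * g * x) : GL (Fin n) F) : Matrix (Fin n) (Fin n) F) i i)
          else 0) := by
    refine Eq.symm (Fintype.sum_equiv ((Equiv.mulLeft x).trans (Equiv.mulRight x⁻¹)) _ _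
      fun h => ?_)
    have he : ((Equiv.mulLeft x).trans (Equiv.mulRight x⁻¹)) h = x * h * x⁻¹ := rfl
    rw [he, htr h, ← hx h]
  rw [step, ConvAux.key ψ hψ f (x⁻¹ * g * x)]
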